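/- Let $(J,\le)$ be a join-semilattice with a function $d:J\to\mathbb{R}$ such that $x\le y$ implies $d(x)\ge d(y)$, and for all $x,y$, $d(x\vee y)\le \min(d(x),d(y))$. Define $\delta(x,y)=d(x)+d(y)-2d(x\vee y)$. Then $\delta$ is symmetric, nonnegative, and satisfies $\delta(x,x)=0$; moreover if additionally for every $x\in J$ the set $\{x\vee z : z\in J\}$ is totally ordered and $x\le y$ implies $\delta(x,y)=d(x)-d(y)$ is compatible, then $\delta$ satisfies the triangle inequality $\delta(x,y)\le \delta(x,z)+\delta(z,y)$ for all $x,y,z\in J$. -/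
import Mathlib


/-- the bifurcation-tree distance on a join-semilattice.
`d` is antitone and `d (x ⊔ y) ≤ min (d x) (d y)`; `δ x y = d x + d y - 2 d (x ⊔ y)`
is symmetric, nonnegative, vanishes on the diagonal, and (under the tree-like
conditions: upper sets `{x ⊔ z : z}` totally ordered and `x ≤ y → δ x y = d x - d y`)
satisfies the triangle inequality. -/
theorem stmt0 {J : Type*} [SemilatticeSup J] (d : J → ℝ) (δ : J → J → ℝ)
    (hδ : ∀ x y, δ x y = d x + d y - 2 * d (x ⊔ y))
    (h1 : ∀ x y : J, x ≤ y → d y ≤ d x)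
    (h2 : ∀ x y : J, d (x ⊔ y) ≤ min (d x) (d y)) :
    (∀ x y, δ x y = δ y x) ∧ (∀ x y, 0 ≤ δ x y) ∧ (∀ x, δ x x = 0) ∧
    ((∀ x : J, IsChain (· ≤ ·) {w : J | ∃ z : J, w = x ⊔ z}) →
      (∀ x y : J, x ≤ y → δ x y = d x - d y) →
      ∀ x y z : J, δ x y ≤ δ x z + δ z y) := by
  refine ⟨fun x y => by rw [hδ, hδ, sup_comm]; ring, ?_, fun x => by
    rw [hδ, sup_idem]; ring, ?_⟩
  · intro x y
    have := h2 x y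
    rw [hδ]
    simp only [le_min_iff] at this
    linarith [this.1, this.2]
  · intro hchain _ x y z
    have hmem1 : (z ⊔ x) ∈ {w : J | ∃ u : J, w = z ⊔ u} := ⟨x, rfl⟩
    have hmem2 : (z ⊔ y) ∈ {w : J | ∃ u : J, w = z ⊔ u} := ⟨y, rfl⟩
    have hxz : d (x ⊔ z) = d (z ⊔ x) := by rw [sup_comm]
    have key : d (z ⊔ x) + d (z ⊔ y) ≤ d z + d (x ⊔ y) := by
      have hcomp : z ⊔ x ≤ z ⊔ y ∨ z ⊔ y ≤ z ⊔ x := by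
        rcases eq_or_ne (z ⊔ x) (z ⊔ y) with h | h
        · exact Or.inl h.le
        · exact hchain z hmem1 hmem2 h
      rcases hcomp with hle | hle
      · have hx : x ≤ z ⊔ y := le_trans le_sup_right hle
        have hxy : x ⊔ y ≤ z ⊔ y := sup_le hx le_sup_right
        have := h1 _ _ hxy
        have h2' := (le_min_iff.mp (h2 z x)).1
        linarith
      · have hy : y ≤ z ⊔ x := le_trans le_sup_right hle
        have hxy : x ⊔ y ≤ z ⊔ x := sup_le le_sup_right hy
        have := h1 _ _ hxy
        have h2' := (le_min_iff.mp (h2 z y)).1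
        linarith
    rw [hδ, hδ, hδ]
    linarith
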